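/- For all j ≥ 0 and n ≥ 0, a_{7j+1}(7n+5) ≡ 0 (mod 7), where a_k(n) is defined by the generating function f_2^{k-1}/f_1^k. -/

import Mathlib

noncomputable section

/-- The formal power series `f m = prod_{i >= 1} (1 - q^(m*i))` in `ZZ[[q]]`, defined
coefficient-wise via the stabilizing finite partial products. -/
noncomputable def f (m : Nat) : PowerSeries Int :=
  PowerSeries.mk fun n =>
    PowerSeries.coeff n (Finset.prod (Finset.range (n + 1)) fun i => (1 - PowerSeries.X ^ (m * (i + 1))))

namespace JacAux
open PowerSeries Finset

abbrev A := PowerSeries ℤ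

/-- triangular numbers -/
def tn (k : ℕ) : ℕ := k * (k+1) / 2

lemma tn_mul_two (k : ℕ) : tn k * 2 = k * (k+1) :=
  Nat.div_mul_cancel (Nat.even_mul_succ_self k).two_dvd

lemma tn_succ (k : ℕ) : tn (k+1) = tn k + (k+1) := by
  have h1 := tn_mul_two k
  have h2 := tn_mul_two (k+1)
  nlinarith [h1, h2]

lemma tn_zero : tn 0 = 0 := rfl

lemma tn_mono : StrictMono tn := by
  apply strictMono_nat_of_lt_succ
  intro k; rw [tn_succ]; omega

lemma le_tn (k : ℕ) : k ≤ tn k := by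
  induction k with
  | zero => simp [tn_zero]
  | succ n ih => rw [tn_succ]; omega

/-- partial products -/
def sm (m r : ℕ) : A := ∏ j ∈ range r, (1 - X ^ (m * (j+1)))

abbrev s (r : ℕ) : A := sm 1 r

lemma sm_zero (m : ℕ) : sm m 0 = 1 := by simp [sm]

lemma sm_succ (m r : ℕ) : sm m (r+1) = sm m r * (1 - X ^ (m * (r+1))) := by
  simp [sm, prod_range_succ]

lemma constantCoeff_sm (m r : ℕ) (hm : 0 < m) : constantCoeff (sm m r) = 1 := by
  rw [sm, map_prod]
  apply Finset.prod_eq_one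
  intro j _
  rw [map_sub, map_one, map_pow, constantCoeff_X, zero_pow (by positivity), sub_zero]

lemma isUnit_s (r : ℕ) : IsUnit (s r) := by
  rw [PowerSeries.isUnit_iff_constantCoeff, constantCoeff_sm 1 r one_pos]
  exact isUnit_one

lemma s_split1 (r : ℕ) : s (r+1) = s r * (1 - X ^ (r+1)) := by
  simpa using sm_succ 1 r

lemma s_split2 (r : ℕ) : s (r+2) = s r * ((1 - X ^ (r+1)) * (1 - X ^ (r+2))) := by
  rw [s_split1 (r+1), s_split1 r]; ring

lemma isUnit_one_sub_X (m : ℕ) (hm : 0 < m) : IsUnit ((1 : A) - X ^ m) := by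
  rw [PowerSeries.isUnit_iff_constantCoeff, map_sub, map_one, map_pow, constantCoeff_X,
    zero_pow (by positivity), sub_zero]
  exact isUnit_one

lemma inv_shift1 (r : ℕ) :
    Ring.inverse (s r) = (1 - X ^ (r+1)) * Ring.inverse (s (r+1)) := by
  conv_rhs => rw [s_split1 r, Ring.mul_inverse_rev]
  rw [show (1 - X ^ (r+1)) * (Ring.inverse (1 - X ^ (r+1)) * Ring.inverse (s r))
      = ((1 - X ^ (r+1)) * Ring.inverse (1 - X ^ (r+1))) * Ring.inverse (s r) from by ring,
    Ring.mul_inverse_cancel _ (isUnit_one_sub_X (r+1) (by omega)), one_mul]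

lemma inv_shift2 (r : ℕ) :
    Ring.inverse (s r) = (1 - X ^ (r+1)) * ((1 - X ^ (r+2)) * Ring.inverse (s (r+2))) := by
  rw [inv_shift1 r, inv_shift1 (r+1)]

/-- Gaussian binomial as a power series ratio -/
def qb (m k : ℕ) : A :=
  if k ≤ m then s m * (Ring.inverse (s k) * Ring.inverse (s (m-k))) else 0

lemma qb_of_gt {m k : ℕ} (h : m < k) : qb m k = 0 := if_neg (by omega)

lemma qb_of_le {m k : ℕ} (h : k ≤ m) :
    qb m k = s m * (Ring.inverse (s k) * Ring.inverse (s (m-k))) := if_pos h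

lemma s_zero : s 0 = 1 := sm_zero 1

lemma qb_zero (m : ℕ) : qb m 0 = 1 := by
  rw [qb_of_le (Nat.zero_le m), s_zero, Nat.sub_zero, Ring.inverse_one, one_mul,
    Ring.mul_inverse_cancel _ (isUnit_s m)]

lemma qb_self (m : ℕ) : qb m m = 1 := by
  rw [qb_of_le le_rfl, Nat.sub_self, s_zero, Ring.inverse_one, mul_one,
    Ring.mul_inverse_cancel _ (isUnit_s m)]

lemma qb_symm {m k : ℕ} (h : k ≤ m) : qb m k = qb m (m - k) := by
  rw [qb_of_le h, qb_of_le (Nat.sub_le m k), Nat.sub_sub_self h]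
  ring

/-- the core three-term identity, main case -/
lemma core_main (k e : ℕ) :
    qb (2*(k+e+1)+2) ((k+e+1)+1+k)
      = X^((k+e+1)+1+k) * qb (2*(k+e+1)) ((k+e+1)+1+k)
        + (1 + X^(2*(k+e+1)+1)) * qb (2*(k+e+1)) ((k+e+1)+k)
        + X^((k+e+1)+1-k) * qb (2*(k+e+1)) ((k+e+1)+k-1) := by
  rw [show (k+e+1)+k-1 = 2*k+e by omega]
  rw [show (k+e+1)+1-k = e+2 by omega]
  rw [show (k+e+1)+1+k = 2*k+e+2 by ring]
  rw [show (k+e+1)+k = 2*k+e+1 by ring]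
  rw [show 2*(k+e+1)+2 = 2*k+2*e+4 by ring]
  rw [show 2*(k+e+1)+1 = 2*k+2*e+3 by ring]
  rw [show 2*(k+e+1) = 2*k+2*e+2 by ring]
  rw [qb_of_le (by omega), qb_of_le (by omega), qb_of_le (by omega), qb_of_le (by omega)]
  rw [show 2*k+2*e+4 - (2*k+e+2) = e+2 by omega]
  rw [show 2*k+2*e+2 - (2*k+e+2) = e by omega]
  rw [show 2*k+2*e+2 - (2*k+e+1) = e+1 by omega]
  rw [show 2*k+2*e+2 - (2*k+e) = e+2 by omega]
  rw [show Ring.inverse (s e) = (1 - X ^ (e+1)) * ((1 - X ^ (e+2)) * Ring.inverse (s (e+2)))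
      from inv_shift2 e]
  rw [show Ring.inverse (s (e+1)) = (1 - X ^ (e+2)) * Ring.inverse (s (e+2))
      from by simpa using inv_shift1 (e+1)]
  rw [show Ring.inverse (s (2*k+e+1)) = (1 - X ^ (2*k+e+2)) * Ring.inverse (s (2*k+e+2))
      from by simpa [show 2*k+e+1+1 = 2*k+e+2 by ring] using inv_shift1 (2*k+e+1)]
  rw [show Ring.inverse (s (2*k+e)) = (1 - X ^ (2*k+e+1)) * ((1 - X ^ (2*k+e+2)) * Ring.inverse (s (2*k+e+2)))
      from by simpa [show 2*k+e+1+1 = 2*k+e+2 by ring] using inv_shift2 (2*k+e)]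
  rw [show s (2*k+2*e+4) = s (2*k+2*e+2) * ((1 - X ^ (2*k+2*e+3)) * (1 - X ^ (2*k+2*e+4)))
      from by simpa [show 2*k+2*e+2+1 = 2*k+2*e+3 by ring, show 2*k+2*e+2+2 = 2*k+2*e+4 by ring]
        using s_split2 (2*k+2*e+2)]
  ring



lemma core_kn (e : ℕ) :
    qb (2*(e+1)+2) ((e+1)+1+(e+1))
      = X^((e+1)+1+(e+1)) * qb (2*(e+1)) ((e+1)+1+(e+1))
        + (1 + X^(2*(e+1)+1)) * qb (2*(e+1)) ((e+1)+(e+1))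
        + X^((e+1)+1-(e+1)) * qb (2*(e+1)) ((e+1)+(e+1)-1) := by
  rw [show (e+1)+(e+1)-1 = 2*e+1 by omega]
  rw [show (e+1)+1-(e+1) = 1 by omega]
  rw [show (e+1)+1+(e+1) = 2*e+3 by ring]
  rw [show (e+1)+(e+1) = 2*e+2 by ring]
  rw [show 2*(e+1)+2 = 2*e+4 by ring]
  rw [show 2*(e+1)+1 = 2*e+3 by ring]
  rw [show 2*(e+1) = 2*e+2 by ring]
  rw [show qb (2*e+2) (2*e+3) = 0 from qb_of_gt (by omega)]
  rw [show qb (2*e+4) (2*e+3) = s (2*e+4) * (Ring.inverse (s (2*e+3)) * Ring.inverse (s 1)) from by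
    rw [qb_of_le (by omega), show 2*e+4 - (2*e+3) = 1 by omega]]
  rw [show qb (2*e+2) (2*e+2) = s (2*e+2) * (Ring.inverse (s (2*e+2)) * Ring.inverse (s 0)) from by
    rw [qb_of_le (by omega), show 2*e+2 - (2*e+2) = 0 by omega]]
  rw [show qb (2*e+2) (2*e+1) = s (2*e+2) * (Ring.inverse (s (2*e+1)) * Ring.inverse (s 1)) from by
    rw [qb_of_le (by omega), show 2*e+2 - (2*e+1) = 1 by omega]]
  rw [show Ring.inverse (s (2*e+2)) = (1 - X ^ (2*e+3)) * Ring.inverse (s (2*e+3))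
      from by simpa [show 2*e+2+1 = 2*e+3 by ring] using inv_shift1 (2*e+2)]
  rw [show Ring.inverse (s (2*e+1)) = (1 - X ^ (2*e+2)) * ((1 - X ^ (2*e+3)) * Ring.inverse (s (2*e+3)))
      from by simpa [show 2*e+1+1 = 2*e+2 by ring, show 2*e+1+2 = 2*e+3 by ring] using inv_shift2 (2*e+1)]
  rw [show Ring.inverse (s 0) = (1 - X ^ 1) * Ring.inverse (s 1)
      from by simpa using inv_shift1 0]
  rw [show s (2*e+4) = s (2*e+2) * ((1 - X ^ (2*e+3)) * (1 - X ^ (2*e+4)))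
      from by simpa [show 2*e+2+1 = 2*e+3 by ring, show 2*e+2+2 = 2*e+4 by ring]
        using s_split2 (2*e+2)]
  ring

lemma core (n k : ℕ) (h1 : 1 ≤ n + k) (hk : k ≤ n + 1) :
    qb (2*n+2) (n+1+k)
      = X^(n+1+k) * qb (2*n) (n+1+k)
        + (1 + X^(2*n+1)) * qb (2*n) (n+k)
        + X^(n+1-k) * qb (2*n) (n+k-1) := by
  rcases Nat.lt_or_ge k n with h | h
  · -- k + 1 ≤ n : main case
    obtain ⟨e, he⟩ : ∃ e, n = k + e + 1 := ⟨n - k - 1, by omega⟩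
    subst he
    exact core_main k e
  · rcases Nat.eq_or_lt_of_le h with h' | h'
    · -- k = n, and n ≥ 1
      obtain ⟨e, he⟩ : ∃ e, n = e + 1 := ⟨n - 1, by omega⟩
      subst he; subst h'
      exact core_kn e
    · -- k = n + 1
      have hk1 : k = n + 1 := by omega
      subst hk1
      rw [show n+1+(n+1) = 2*n+2 by ring]
      rw [show n+(n+1)-1 = 2*n by omega]
      rw [show n+1-(n+1) = 0 by omega]
      rw [show n+(n+1) = 2*n+1 by ring]
      rw [qb_self, qb_of_gt (by omega), qb_of_gt (by omega), qb_self]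
      simp



/-- exponent of X in the JTP coefficient -/
def En (n i : ℕ) : ℕ := if n ≤ i then tn (i - n) else tn (n - i - 1)

/-- coefficients of the finite Jacobi triple product -/
def c (n i : ℕ) : A := (-1 : A)^(n+i) * X^(En n i) * qb (2*n) i

lemma c_zero_of_gt {n i : ℕ} (h : 2*n < i) : c n i = 0 := by
  unfold c; rw [qb_of_gt h]; ring

lemma c_rec_A (n k : ℕ) (h1 : 1 ≤ n + k) (hk : k ≤ n+1) :
    c (n+1) (n+1+k)
      = -(X^n) * c n (n+1+k) + (1 + X^(2*n+1)) * c n (n+k) - X^(n+1) * c n (n+k-1) := by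
  have hc := core n k h1 hk
  have hE1 : En (n+1) (n+1+k) = tn k := by unfold En; rw [if_pos (by omega)]; congr 1; omega
  have hE2 : En n (n+1+k) = tn (k+1) := by unfold En; rw [if_pos (by omega)]; congr 1; omega
  have hE3 : En n (n+k) = tn k := by unfold En; rw [if_pos (by omega)]; congr 1; omega
  have hE4 : En n (n+k-1) = tn (k-1) := by
    unfold En; split_ifs with h
    · congr 1; omega
    · congr 1; omega
  have hs1 : ((-1 : A))^((n+1)+(n+1+k)) = (-1 : A)^(n+(n+k)) := by
    rw [show (n+1)+(n+1+k) = (n+(n+k))+2 by omega, pow_add]; norm_num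
  have hs2 : ((-1 : A))^(n+(n+1+k)) = -(-1 : A)^(n+(n+k)) := by
    rw [show n+(n+1+k) = (n+(n+k))+1 by omega, pow_succ]; ring
  have hs4 : ((-1 : A))^(n+(n+k-1)) = -(-1 : A)^(n+(n+k)) := by
    rw [show n+(n+k) = (n+(n+k-1))+1 by omega, pow_succ]; ring
  have hX : (X : A)^(n+1) * X^(tn (k-1)) = X^(tn k) * X^(n+1-k) := by
    rw [← pow_add, ← pow_add]
    congr 1
    rcases k with _ | k'
    · simp; omega
    · have := tn_succ k'; simp only [Nat.add_sub_cancel]; omega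
  unfold c
  rw [show 2*(n+1) = 2*n+2 by ring, hE1, hE2, hE3, hE4, hs1, hs2, hs4, tn_succ]
  linear_combination ((-1:A)^(n+(n+k)) * X^(tn k)) * hc
    - ((-1:A)^(n+(n+k)) * qb (2*n) (n+k-1)) * hX

lemma c_rec_A' (n k : ℕ) (hk : n+1 < k) :
    c (n+1) (n+1+k)
      = -(X^n) * c n (n+1+k) + (1 + X^(2*n+1)) * c n (n+k) - X^(n+1) * c n (n+k-1) := by
  rw [c_zero_of_gt (show 2*(n+1) < n+1+k by omega),
    c_zero_of_gt (show 2*n < n+1+k by omega),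
    c_zero_of_gt (show 2*n < n+k by omega),
    c_zero_of_gt (show 2*n < n+k-1 by omega)]
  ring

lemma c_rec_B (n i : ℕ) (h2 : 2 ≤ i) (hi : i ≤ n) :
    c (n+1) i
      = -(X^n) * c n i + (1 + X^(2*n+1)) * c n (i-1) - X^(n+1) * c n (i-2) := by
  have hc := core n (n-i+1) (by omega) (by omega)
  rw [show qb (2*n+2) (n+1+(n-i+1)) = qb (2*n+2) i from by
        rw [qb_symm (show n+1+(n-i+1) ≤ 2*n+2 by omega),
          show 2*n+2 - (n+1+(n-i+1)) = i by omega],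
      show qb (2*n) (n+1+(n-i+1)) = qb (2*n) (i-2) from by
        rw [qb_symm (show n+1+(n-i+1) ≤ 2*n by omega),
          show 2*n - (n+1+(n-i+1)) = i-2 by omega],
      show qb (2*n) (n+(n-i+1)) = qb (2*n) (i-1) from by
        rw [qb_symm (show n+(n-i+1) ≤ 2*n by omega),
          show 2*n - (n+(n-i+1)) = i-1 by omega],
      show qb (2*n) (n+(n-i+1)-1) = qb (2*n) i from by
        rw [qb_symm (show n+(n-i+1)-1 ≤ 2*n by omega),
          show 2*n - (n+(n-i+1)-1) = i by omega]] at hc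
  have hE1 : En (n+1) i = tn (n-i) := by unfold En; rw [if_neg (by omega)]; congr 1; omega
  have hE2 : En n i = tn (n-i-1) := by
    unfold En; split_ifs with h
    · congr 1; omega
    · rfl
  have hE3 : En n (i-1) = tn (n-i) := by unfold En; rw [if_neg (by omega)]; congr 1; omega
  have hE4 : En n (i-2) = tn (n-i+1) := by unfold En; rw [if_neg (by omega)]; congr 1; omega
  have hs1 : ((-1 : A))^((n+1)+i) = -(-1 : A)^(n+i) := by
    rw [show (n+1)+i = (n+i)+1 by omega, pow_succ]; ring
  have hs3 : ((-1 : A))^(n+(i-1)) = -(-1 : A)^(n+i) := by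
    rw [show n+i = (n+(i-1))+1 by omega, pow_succ]; ring
  have hs4 : ((-1 : A))^(n+(i-2)) = (-1 : A)^(n+i) := by
    conv_rhs => rw [show n+i = (n+(i-2))+2 by omega, pow_add]
    norm_num
  have hX : (X : A)^(tn (n-i)) * X^(n+1-(n-i+1)) = X^n * X^(tn (n-i-1)) := by
    rw [← pow_add, ← pow_add]
    congr 1
    rcases Nat.eq_zero_or_pos (n-i) with h0 | hpos
    · rw [h0]; simp only [Nat.zero_sub, tn_zero]; omega
    · obtain ⟨d, hd⟩ : ∃ d, n - i = d + 1 := ⟨n-i-1, by omega⟩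
      rw [hd, show d+1-1 = d by omega]
      have := tn_succ d
      omega
  unfold c
  rw [show 2*(n+1) = 2*n+2 by ring, hE1, hE2, hE3, hE4, hs1, hs3, hs4,
    show tn (n-i+1) = tn (n-i) + (n-i+1) from tn_succ (n-i)]
  linear_combination (-((-1:A)^(n+i)) * X^(tn (n-i))) * hc
    - ((-1:A)^(n+i) * qb (2*n) i) * hX



lemma s_one : s 1 = 1 - X^1 := by
  have := s_split1 0; rw [s_zero] at this; simpa using this

lemma c00 : c 0 0 = 1 := by
  unfold c En
  rw [qb_zero]
  simp [tn_zero]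

lemma qb_two_one : qb 2 1 = 1 + X := by
  rw [qb_of_le (by omega), show (2:ℕ)-1 = 1 from rfl]
  have hs2 : s 2 = ((1+X) * s 1) * s 1 := by
    have h2 := s_split1 1
    have h1 := s_one
    rw [h2, h1]
    ring
  rw [hs2]
  have h := Ring.mul_inverse_cancel (s 1) (isUnit_s 1)
  linear_combination ((1+(X:A)) * (s 1 * Ring.inverse (s 1) + 1)) * h

lemma En_zero (n : ℕ) : En n 0 = tn (n-1) := by
  unfold En; split_ifs with h
  · congr 1; omega
  · rfl

lemma c_rec0 (n : ℕ) : c (n+1) 0 = -(X^n) * c n 0 := by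
  unfold c
  rw [qb_zero, qb_zero, En_zero, En_zero, show n+1-1 = n by omega]
  have hs : ((-1:A))^(n+1+0) = -(-1:A)^(n+0) := by
    rw [show n+1+0 = (n+0)+1 by omega, pow_succ]; ring
  have hX : (X:A)^(tn n) = X^n * X^(tn (n-1)) := by
    rw [← pow_add]
    congr 1
    rcases n with _ | d
    · norm_num
    · have := tn_succ d; simp only [Nat.add_sub_cancel]; omega
  rw [hs, hX]
  ring

lemma c_rec1_pos (n : ℕ) (hn : 1 ≤ n) :
    c (n+1) 1 = -(X^n) * c n 1 + (1 + X^(2*n+1)) * c n 0 := by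
  have hc := core n n (by omega) (by omega)
  rw [show qb (2*n+2) (n+1+n) = qb (2*n+2) 1 from by
        rw [qb_symm (show n+1+n ≤ 2*n+2 by omega), show 2*n+2 - (n+1+n) = 1 by omega],
      show qb (2*n) (n+1+n) = 0 from qb_of_gt (by omega),
      show qb (2*n) (n+n) = 1 from by
        rw [show n+n = 2*n by ring, qb_self],
      show qb (2*n) (n+n-1) = qb (2*n) 1 from by
        rw [qb_symm (show n+n-1 ≤ 2*n by omega), show 2*n - (n+n-1) = 1 by omega]] at hc
  unfold c
  rw [show 2*(n+1) = 2*n+2 by ring, qb_zero]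
  have hE1 : En (n+1) 1 = tn (n-1) := by
    unfold En; split_ifs with h <;> first | rfl | (congr 1; omega) | omega
  have hE2 : En n 1 = tn (n-2) := by
    unfold En; split_ifs with h <;> first | rfl | (congr 1; omega) | omega
  rw [hE1, hE2, En_zero]
  have hs1 : ((-1:A))^(n+1+1) = (-1:A)^(n+0) := by
    rw [show n+1+1 = (n+0)+2 by omega, pow_add]; norm_num
  have hs2 : ((-1:A))^(n+1) = -(-1:A)^(n+0) := by
    rw [show n+1 = (n+0)+1 by omega, pow_succ]; ring
  rw [hs1, hs2]
  have hX : (X:A)^(tn (n-1)) * X^(n+1-n) = X^n * X^(tn (n-2)) := by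
    rw [← pow_add, ← pow_add]
    congr 1
    rcases n with _ | d
    · omega
    · rcases d with _ | dd
      · norm_num; omega
      · have h1 : dd+1+1-1 = dd+1 := by omega
        have h2 : dd+1+1-2 = dd := by omega
        rw [h1, h2]
        have := tn_succ dd
        omega
  linear_combination ((-1:A)^(n+0) * X^(tn (n-1))) * hc + ((-1:A)^(n+0) * qb (2*n) 1) * hX

lemma c_rec1 (n : ℕ) : c (n+1) 1 = -(X^n) * c n 1 + (1 + X^(2*n+1)) * c n 0 := by
  rcases n with _ | e
  · -- n = 0
    rw [c_zero_of_gt (show 2*0 < 1 by omega), c00]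
    unfold c
    rw [show (0:ℕ)+1+1 = 2 by rfl, show 2*(0+1) = 2 by rfl, qb_two_one]
    unfold En
    rw [if_pos (by omega)]
    simp [tn_zero]
  · -- n = e+1 ≥ 1
    exact c_rec1_pos (e+1) (by omega)

/-- the finite triple product -/
def Pp (n : ℕ) : Polynomial A :=
  ∏ j ∈ range n, ((1 - Polynomial.C (X^(j+1)) * Polynomial.X) * (Polynomial.X - Polynomial.C (X^j)))

def Qp (n : ℕ) : Polynomial A :=
  ∑ i ∈ range (2*n+1), Polynomial.C (c n i) * Polynomial.X ^ i

lemma coeff_Qp (n m : ℕ) : (Qp n).coeff m = c n m := by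
  unfold Qp
  rw [Polynomial.finset_sum_coeff]
  simp only [Polynomial.coeff_C_mul, Polynomial.coeff_X_pow]
  rw [Finset.sum_eq_single m]
  · simp
  · intro i _ hne
    rw [if_neg (fun h => hne h.symm), mul_zero]
  · intro hm
    rw [c_zero_of_gt (by simp at hm; omega)]
    simp

theorem P_eq_Q (n : ℕ) : Pp n = Qp n := by
  induction n with
  | zero =>
    unfold Pp Qp
    simp [c00]
  | succ n ih =>
    have hP : Pp (n+1) = Pp n
        * ((1 - Polynomial.C (X^(n+1)) * Polynomial.X) * (Polynomial.X - Polynomial.C (X^n))) :=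
      Finset.prod_range_succ _ n
    rw [hP, ih]
    have hG : (1 - Polynomial.C ((X:A)^(n+1)) * Polynomial.X) * (Polynomial.X - Polynomial.C ((X:A)^n))
        = Polynomial.C (-((X:A)^n))
          + (Polynomial.C (1 + (X:A)^(2*n+1)) * Polynomial.X
             - Polynomial.C ((X:A)^(n+1)) * Polynomial.X^2) := by
      have hx : (X:A)^(2*n+1) = X^(n+1) * X^n := by
        ring
      rw [map_neg, map_add, map_one, hx, map_mul]
      ring
    rw [hG]
    apply Polynomial.ext; intro m
    rw [coeff_Qp, mul_add, mul_sub,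
      show Qp n * (Polynomial.C (1 + (X:A)^(2*n+1)) * Polynomial.X)
          = (Qp n * Polynomial.C (1 + (X:A)^(2*n+1))) * Polynomial.X^1 from by ring,
      show Qp n * (Polynomial.C ((X:A)^(n+1)) * Polynomial.X^2)
          = (Qp n * Polynomial.C ((X:A)^(n+1))) * Polynomial.X^2 from by ring]
    rw [Polynomial.coeff_add, Polynomial.coeff_sub, Polynomial.coeff_mul_X_pow',
      Polynomial.coeff_mul_X_pow', Polynomial.coeff_mul_C, Polynomial.coeff_mul_C,
      Polynomial.coeff_mul_C, coeff_Qp, coeff_Qp, coeff_Qp]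
    rcases m with _ | (_ | m)
    · -- m = 0
      norm_num
      rw [c_rec0]; ring
    · -- m = 1
      norm_num
      rw [c_rec1]; ring
    · -- m ≥ 2
      rw [if_pos (by omega), if_pos (by omega),
        show m+1+1-1 = m+1 by omega, show m+1+1-2 = m by omega]
      rcases le_or_gt (m+2) n with hB | hA
      · rw [show (m+1+1 : ℕ) = m+2 from rfl, c_rec_B n (m+2) (by omega) hB,
          show m+2-1 = m+1 by omega, show m+2-2 = m by omega]
        ring
      · obtain ⟨k, hk0⟩ : ∃ k, k = m+1-n := ⟨_, rfl⟩
        have hm2 : m+1+1 = n+1+k := by omega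
        have hm1 : m+1 = n+k := by omega
        have hm0 : m = n+k-1 := by omega
        rw [hm2, hm1, hm0]
        rcases le_or_gt 1 (n+k) with h1 | h1
        · rcases le_or_gt k (n+1) with hk | hk
          · rw [c_rec_A n k h1 hk]; ring
          · rw [c_rec_A' n k hk]; ring
        · omega



lemma s_eq (r : ℕ) : s r = ∏ j ∈ range r, (1 - X^(j+1)) := by
  show sm 1 r = _
  unfold sm
  simp [one_mul]

theorem star (n : ℕ) :
    ∑ i ∈ range (2*(n+1)+1), c (n+1) i * (i : A) = s (n+1) * s n := by
  have h := congrArg (fun p => Polynomial.eval 1 (Polynomial.derivative p)) (P_eq_Q (n+1))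
  -- RHS of h : eval 1 (derivative (Qp (n+1)))
  have hQ : Polynomial.eval 1 (Polynomial.derivative (Qp (n+1)))
      = ∑ i ∈ range (2*(n+1)+1), c (n+1) i * (i : A) := by
    unfold Qp
    rw [Polynomial.derivative_sum]
    simp only [Polynomial.derivative_C_mul_X_pow]
    rw [Polynomial.eval_finset_sum]
    simp only [Polynomial.eval_mul, Polynomial.eval_C, Polynomial.eval_pow, Polynomial.eval_X,
      one_pow, mul_one]
  -- LHS of h : eval 1 (derivative (Pp (n+1)))
  have hfact : Pp (n+1) = (Polynomial.X - 1)
      * ((∏ j ∈ range n, ((1 - Polynomial.C ((X:A)^(j+2)) * Polynomial.X)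
            * (Polynomial.X - Polynomial.C ((X:A)^(j+1)))))
         * (1 - Polynomial.C ((X:A)^1) * Polynomial.X)) := by
    unfold Pp
    rw [Finset.prod_range_succ'
      (fun j => ((1 - Polynomial.C ((X:A)^(j+1)) * Polynomial.X)
        * (Polynomial.X - Polynomial.C ((X:A)^j))))]
    simp only [pow_zero, map_one]
    rw [show (∏ j ∈ range n, ((1 - Polynomial.C ((X:A)^(j+1+1)) * Polynomial.X)
        * (Polynomial.X - Polynomial.C ((X:A)^(j+1)))))
      = ∏ j ∈ range n, ((1 - Polynomial.C ((X:A)^(j+2)) * Polynomial.X)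
        * (Polynomial.X - Polynomial.C ((X:A)^(j+1)))) from rfl]
    ring
  have hP : Polynomial.eval 1 (Polynomial.derivative (Pp (n+1))) = s (n+1) * s n := by
    rw [hfact, Polynomial.derivative_mul]
    rw [Polynomial.eval_add, Polynomial.eval_mul, Polynomial.eval_mul, Polynomial.eval_mul]
    rw [show Polynomial.eval 1 (Polynomial.X - 1 : Polynomial A) = 0 by simp]
    rw [show Polynomial.eval 1 (Polynomial.derivative (Polynomial.X - 1 : Polynomial A)) = 1 by simp]
    rw [zero_mul, add_zero, one_mul]
    rw [Polynomial.eval_prod]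
    simp only [Polynomial.eval_mul, Polynomial.eval_sub, Polynomial.eval_one, Polynomial.eval_C,
      Polynomial.eval_X, mul_one]
    rw [Finset.prod_mul_distrib]
    rw [s_eq (n+1), s_eq n]
    rw [Finset.prod_range_succ' (fun j => (1 - (X:A)^(j+1)))]
    ring
  rw [hP, hQ] at h
  exact h.symm



lemma dvd_mul_one_sub {x a b : A} (ha : x ∣ a - 1) (hb : x ∣ b - 1) : x ∣ a * b - 1 := by
  have : a * b - 1 = a * (b - 1) + (a - 1) := by ring
  rw [this]
  exact dvd_add (Dvd.dvd.mul_left hb a) ha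

lemma dvd_prod_one_sub {x : A} {t : Finset ℕ} {g : ℕ → A}
    (h : ∀ i ∈ t, x ∣ g i - 1) : x ∣ (∏ i ∈ t, g i) - 1 := by
  classical
  induction t using Finset.induction_on with
  | empty => simp
  | insert _ _ hni ih =>
    rename_i a t0
    rw [Finset.prod_insert hni]
    exact dvd_mul_one_sub (h a (Finset.mem_insert_self a t0))
      (ih (fun i hi => h i (Finset.mem_insert_of_mem hi)))

lemma dvd_inverse_sub_one {x a : A} (hu : IsUnit a) (ha : x ∣ a - 1) :
    x ∣ Ring.inverse a - 1 := by
  have h : Ring.inverse a - 1 = -(Ring.inverse a * (a - 1)) := by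
    rw [mul_sub, Ring.inverse_mul_cancel _ hu]; ring
  rw [h]
  exact dvd_neg.mpr (Dvd.dvd.mul_left ha _)

lemma coeff_zero_of_dvd {φ : A} {N d : ℕ} (h : X^N ∣ φ) (hd : d < N) : coeff d φ = 0 :=
  (PowerSeries.X_pow_dvd_iff.mp h) d hd

lemma coeff_eq_of_dvd {φ ψ : A} {N d : ℕ} (h : X^N ∣ φ - ψ) (hd : d < N) :
    coeff d φ = coeff d ψ := by
  have := coeff_zero_of_dvd h hd
  rw [map_sub] at this
  linarith

lemma sm_split (m : ℕ) {r r' : ℕ} (h : r ≤ r') :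
    sm m r' = sm m r * ∏ j ∈ Finset.Ico r r', (1 - X^(m*(j+1))) := by
  unfold sm
  rw [Finset.range_eq_Ico, ← Finset.prod_Ico_consecutive _ (Nat.zero_le r) h, Finset.range_eq_Ico]

lemma sm_dvd (m : ℕ) (hm : 0 < m) {r r' : ℕ} (h : r ≤ r') :
    (X:A)^(r+1) ∣ sm m r' - sm m r := by
  rw [sm_split m h]
  have : sm m r * (∏ j ∈ Finset.Ico r r', (1 - X^(m*(j+1)))) - sm m r
      = sm m r * ((∏ j ∈ Finset.Ico r r', (1 - X^(m*(j+1)))) - 1) := by ring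
  rw [this]
  apply Dvd.dvd.mul_left
  apply dvd_prod_one_sub
  intro j hj
  rw [Finset.mem_Ico] at hj
  have : (1:A) - X^(m*(j+1)) - 1 = -(X^(m*(j+1))) := by ring
  rw [this]
  exact dvd_neg.mpr (pow_dvd_pow X (by nlinarith [hj.1, hm]))

lemma f_dvd (m : ℕ) (hm : 0 < m) (N : ℕ) : (X:A)^(N+1) ∣ _root_.f m - sm m (N+1) := by
  rw [PowerSeries.X_pow_dvd_iff]
  intro d hd
  rw [map_sub]
  have h1 : coeff d (_root_.f m) = coeff d (sm m (d+1)) := by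
    rw [_root_.f, coeff_mk]
    rfl
  have h2 : coeff d (sm m (N+1)) = coeff d (sm m (d+1)) :=
    coeff_eq_of_dvd (sm_dvd m hm (show d+1 ≤ N+1 by omega)) (by omega)
  rw [h1, h2, sub_self]

lemma isUnit_prod_one_sub_X (t : Finset ℕ) (g : ℕ → ℕ) (hp : ∀ j ∈ t, 0 < g j) :
    IsUnit (∏ j ∈ t, ((1:A) - X^(g j))) := by
  rw [PowerSeries.isUnit_iff_constantCoeff, map_prod]
  have : ∀ j ∈ t, constantCoeff (R := ℤ) (1 - X^(g j)) = 1 := by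
    intro j hj
    rw [map_sub, map_one, map_pow, constantCoeff_X, zero_pow (by have := hp j hj; omega), sub_zero]
  rw [Finset.prod_congr rfl this]
  simp

lemma s_ratio_dvd (a b e : ℕ) (ha : e ≤ a+1) (hb : e ≤ b+1) :
    (X:A)^e ∣ s a * Ring.inverse (s b) - 1 := by
  rcases le_total b a with h | h
  · have hsplit : s a = s b * ∏ j ∈ Finset.Ico b a, (1 - X^(1*(j+1))) := sm_split 1 h
    have hT : s a * Ring.inverse (s b) = ∏ j ∈ Finset.Ico b a, (1 - X^(1*(j+1))) := by
      rw [hsplit, show s b * (∏ j ∈ Finset.Ico b a, ((1:A) - X^(1*(j+1)))) * Ring.inverse (s b)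
          = (s b * Ring.inverse (s b)) * ∏ j ∈ Finset.Ico b a, ((1:A) - X^(1*(j+1))) from by ring,
        Ring.mul_inverse_cancel _ (isUnit_s b), one_mul]
    rw [hT]
    apply dvd_prod_one_sub
    intro j hj
    rw [Finset.mem_Ico] at hj
    have hr : (1:A) - X^(1*(j+1)) - 1 = -(X^(1*(j+1))) := by ring
    rw [hr]
    exact dvd_neg.mpr (pow_dvd_pow X (by omega))
  · have hsplit : s b = s a * ∏ j ∈ Finset.Ico a b, (1 - X^(1*(j+1))) := sm_split 1 h
    have hT : s a * Ring.inverse (s b)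
        = Ring.inverse (∏ j ∈ Finset.Ico a b, ((1:A) - X^(1*(j+1)))) := by
      rw [hsplit, Ring.mul_inverse_rev,
        show s a * (Ring.inverse (∏ j ∈ Finset.Ico a b, ((1:A) - X^(1*(j+1)))) * Ring.inverse (s a))
          = (Ring.inverse (s a) * s a) * Ring.inverse (∏ j ∈ Finset.Ico a b, ((1:A) - X^(1*(j+1)))) from by ring,
        Ring.inverse_mul_cancel _ (isUnit_s a), one_mul]
    rw [hT]
    apply dvd_inverse_sub_one
    · exact isUnit_prod_one_sub_X _ _ (fun j hj => by omega)
    · apply dvd_prod_one_sub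
      intro j hj
      rw [Finset.mem_Ico] at hj
      have hr : (1:A) - X^(1*(j+1)) - 1 = -(X^(1*(j+1))) := by ring
      rw [hr]
      exact dvd_neg.mpr (pow_dvd_pow X (by omega))

lemma w_dvd (N i : ℕ) (hiN : N < i) (hi2 : N + i < 2*(2*N+3)) (hi : i ≤ 2*(2*N+3)) :
    (X:A)^(N+1) ∣ (1 - X^(2*N+3)) * (s (2*N+3) * qb (2*(2*N+3)) i) - 1 := by
  rw [qb_of_le hi]
  have hre : (1 - X^(2*N+3)) * (s (2*N+3) * (s (2*(2*N+3)) * (Ring.inverse (s i) * Ring.inverse (s (2*(2*N+3) - i)))))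
      = (1 - (X:A)^(2*N+3)) * ((s (2*N+3) * Ring.inverse (s i)) * (s (2*(2*N+3)) * Ring.inverse (s (2*(2*N+3) - i)))) := by
    ring
  rw [hre]
  apply dvd_mul_one_sub
  · have : (1:A) - X^(2*N+3) - 1 = -(X^(2*N+3)) := by ring
    rw [this]
    exact dvd_neg.mpr (pow_dvd_pow X (by omega))
  · apply dvd_mul_one_sub
    · exact s_ratio_dvd _ _ _ (by omega) (by omega)
    · exact s_ratio_dvd _ _ _ (by omega) (by omega)

lemma term_coeff (N i : ℕ) (hi : i ≤ 2*(2*N+3)) :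
    coeff N (c (2*N+3) i * (i:A) * ((1 - X^(2*N+3)) * s (2*N+3)))
      = if En (2*N+3) i = N then (i:ℤ) * (-1)^((2*N+3)+i) else 0 := by
  rcases le_or_gt (En (2*N+3) i) N with hE | hE
  · -- low exponent case
    have hiN : N < i ∧ N + i < 2*(2*N+3) := by
      unfold En at hE
      split_ifs at hE with h
      · have := le_tn (i - (2*N+3)); omega
      · have := le_tn ((2*N+3) - i - 1); omega
    have hw := w_dvd N i hiN.1 hiN.2 hi
    obtain ⟨g, hg⟩ := hw
    have hg' : (1 - (X:A)^(2*N+3)) * (s (2*N+3) * qb (2*(2*N+3)) i) = 1 + X^(N+1) * g := by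
      rw [← hg]; ring
    have hre : c (2*N+3) i * (i:A) * ((1 - X^(2*N+3)) * s (2*N+3))
        = C ((-1)^((2*N+3)+i) * (i:ℤ))
          * (X^(En (2*N+3) i) * ((1 - X^(2*N+3)) * (s (2*N+3) * qb (2*(2*N+3)) i))) := by
      unfold c
      rw [map_mul, map_pow, map_neg, map_one, map_natCast]
      ring
    rw [hre, hg', mul_add, mul_one, PowerSeries.coeff_C_mul, map_add, PowerSeries.coeff_X_pow]
    have h0 : coeff N (X^(En (2*N+3) i) * (X^(N+1) * g)) = 0 := by
      apply coeff_zero_of_dvd (N := N+1) _ (by omega)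
      exact Dvd.dvd.mul_left (Dvd.dvd.mul_right dvd_rfl g) _
    rw [h0, add_zero]
    by_cases hEN : En (2*N+3) i = N
    · rw [if_pos hEN.symm, if_pos hEN, mul_one]; ring
    · rw [if_neg (fun hc => hEN hc.symm), if_neg hEN, mul_zero]
  · -- high exponent: whole term divisible by X^(N+1)
    rw [if_neg (by omega)]
    apply coeff_zero_of_dvd (N := N+1) _ (show N < N+1 by omega)
    have h1 : (X:A)^(N+1) ∣ X^(En (2*N+3) i) := pow_dvd_pow X (by omega)
    apply dvd_trans h1
    exact ⟨(-1 : A)^((2*N+3)+i) * qb (2*(2*N+3)) i * (i:A) * ((1 - X^(2*N+3)) * s (2*N+3)),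
      by unfold c; ring⟩



/-- coefficients of Jacobi's cube identity -/
def jac (N : ℕ) : ℤ :=
  ∑ k ∈ range (N+1), (if tn k = N then (-1:ℤ)^k * (2*k+1) else 0)

lemma jac_eq {k N : ℕ} (h : tn k = N) : jac N = (-1:ℤ)^k * (2*k+1) := by
  unfold jac
  rw [Finset.sum_eq_single k]
  · rw [if_pos h]
  · intro i _ hne
    rw [if_neg (fun hc : tn i = N => hne (tn_mono.injective (by rw [h, hc])))]
  · intro hk
    exact absurd (Finset.mem_range.mpr (by have := le_tn k; omega)) hk

lemma jac_eq0 {N : ℕ} (h : ∀ k, tn k ≠ N) : jac N = 0 :=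
  Finset.sum_eq_zero (fun k _ => if_neg (h k))

theorem coeff_cube (N : ℕ) : coeff N ((f 1)^3) = jac N := by
  -- replace f 1 by s (2*N+3)
  have hstab : (X:A)^(N+1) ∣ f 1 - s (2*N+3) := by
    have h1 := f_dvd 1 one_pos N
    have h2 : (X:A)^(N+1) ∣ s (2*N+3) - s (N+1) := by
      have := sm_dvd 1 one_pos (show N+1 ≤ 2*N+3 by omega)
      exact dvd_trans (pow_dvd_pow X (by omega)) this
    have : f 1 - s (2*N+3) = (f 1 - sm 1 (N+1)) - (s (2*N+3) - s (N+1)) := by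
      show _ = _ - (sm 1 (2*N+3) - sm 1 (N+1)); ring
    rw [this]
    exact dvd_sub h1 h2
  have hc3 : coeff N ((f 1)^3) = coeff N ((s (2*N+3))^3) :=
    coeff_eq_of_dvd (dvd_trans hstab (sub_dvd_pow_sub_pow _ _ 3)) (by omega)
  -- expand the cube using star
  have hcube : (s (2*N+3))^3
      = ∑ i ∈ range (2*(2*N+3)+1), c (2*N+3) i * (i:A) * ((1 - X^(2*N+3)) * s (2*N+3)) := by
    rw [← Finset.sum_mul]
    rw [show (2*(2*N+3)+1) = 2*((2*N+2)+1)+1 by ring]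
    rw [show (2*N+3) = (2*N+2)+1 by ring] -- normalize?
    rw [star (2*N+2)]
    have hs := s_split1 (2*N+2)
    rw [hs]
    ring
  rw [hc3, hcube, map_sum]
  rw [Finset.sum_congr rfl (fun i hi => term_coeff N i (by have := Finset.mem_range.mp hi; omega))]
  -- now the combinatorial sum
  by_cases hex : ∃ k, tn k = N
  · obtain ⟨k₀, hk₀⟩ := hex
    have hk₀N : k₀ ≤ N := by have := le_tn k₀; omega
    rw [jac_eq hk₀]
    set i₀ := 2*N+3+k₀ with hi₀
    set i₁ := 2*N+2-k₀ with hi₁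
    have hne : i₁ ≠ i₀ := by omega
    have hm₀ : i₀ ∈ range (2*(2*N+3)+1) := Finset.mem_range.mpr (by omega)
    have hm₁ : i₁ ∈ (range (2*(2*N+3)+1)).erase i₀ :=
      Finset.mem_erase.mpr ⟨hne, Finset.mem_range.mpr (by omega)⟩
    rw [← Finset.add_sum_erase _ _ hm₀, ← Finset.add_sum_erase _ _ hm₁]
    have hz : ∑ i ∈ ((range (2*(2*N+3)+1)).erase i₀).erase i₁,
        (if En (2*N+3) i = N then (i:ℤ) * (-1)^((2*N+3)+i) else 0) = 0 := by
      apply Finset.sum_eq_zero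
      intro i hi
      rw [Finset.mem_erase, Finset.mem_erase] at hi
      apply if_neg
      intro hEi
      unfold En at hEi
      split_ifs at hEi with h
      · have : i - (2*N+3) = k₀ := tn_mono.injective (by rw [hEi, hk₀])
        exact hi.2.1 (by omega)
      · have : 2*N+3 - i - 1 = k₀ := tn_mono.injective (by rw [hEi, hk₀])
        exact hi.1 (by omega)
    rw [hz, add_zero]
    -- evaluate the two terms
    have hE₀ : En (2*N+3) i₀ = N := by
      unfold En; rw [if_pos (by omega), show i₀ - (2*N+3) = k₀ by omega, hk₀]
    have hE₁ : En (2*N+3) i₁ = N := by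
      unfold En; rw [if_neg (by omega), show 2*N+3 - i₁ - 1 = k₀ by omega, hk₀]
    rw [if_pos hE₀, if_pos hE₁]
    have hsg₀ : ((-1:ℤ))^((2*N+3)+i₀) = (-1:ℤ)^k₀ := by
      rw [show (2*N+3)+i₀ = k₀ + 2*(2*N+3) by omega, pow_add, pow_mul, neg_one_sq, one_pow,
        mul_one]
    have hsg₁ : ((-1:ℤ))^((2*N+3)+i₁) = -(-1:ℤ)^k₀ := by
      rw [show (2*N+3)+i₁ = (k₀+1) + 2*(2*N+2-k₀) by omega, pow_add, pow_mul, neg_one_sq,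
        one_pow, mul_one, pow_succ]
      ring
    rw [hsg₀, hsg₁]
    have hc₀ : ((i₀:ℕ):ℤ) = 2*N+3+k₀ := by omega
    have hc₁ : ((i₁:ℕ):ℤ) = 2*N+2-k₀ := by omega
    rw [hc₀, hc₁]
    ring
  · push_neg at hex
    rw [jac_eq0 hex]
    apply Finset.sum_eq_zero
    intro i _
    apply if_neg
    intro hEi
    unfold En at hEi
    split_ifs at hEi with h
    · exact hex _ hEi
    · exact hex _ hEi



lemma f1_cubed : (f 1)^3 = PowerSeries.mk jac := by
  ext N
  rw [coeff_cube, coeff_mk]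

lemma seven_dvd_coeff_six {u : ℕ} (hu : u % 7 = 5) : (7:ℤ) ∣ coeff u ((f 1)^6) := by
  rw [show (6:ℕ) = 3*2 by norm_num, pow_mul, f1_cubed, sq, PowerSeries.coeff_mul]
  apply Finset.dvd_sum
  intro p hp
  rw [Finset.HasAntidiagonal.mem_antidiagonal] at hp
  simp only [coeff_mk]
  by_cases h1 : ∃ k, tn k = p.1
  · obtain ⟨k, hk⟩ := h1
    by_cases h2 : ∃ l, tn l = p.2
    · obtain ⟨l, hl⟩ := h2
      rw [jac_eq hk, jac_eq hl]
      have e1 : (2*k+1)^2 = 4*(tn k * 2)+1 := by rw [tn_mul_two]; ring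
      have e2 : (2*l+1)^2 = 4*(tn l * 2)+1 := by rw [tn_mul_two]; ring
      have h8 : (2*k+1)^2 + (2*l+1)^2 = 8*u + 2 := by omega
      have hsq : ((2*k+1 : ℕ) : ZMod 7)^2 + ((2*l+1 : ℕ) : ZMod 7)^2 = 0 := by
        have hcast := congrArg (fun t : ℕ => (t : ZMod 7)) h8
        push_cast at hcast ⊢
        rw [hcast]
        rw [show ((u:ℕ) : ZMod 7) = ((u % 7 : ℕ) : ZMod 7) from (ZMod.natCast_mod u 7).symm, hu]
        decide
      have hdec : ∀ x y : ZMod 7, x^2 + y^2 = 0 → x = 0 := by decide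
      have h7k : (7:ℕ) ∣ 2*k+1 :=
        (ZMod.natCast_eq_zero_iff _ 7).mp (hdec _ _ hsq)
      have h7k' : (7:ℤ) ∣ (2*(k:ℤ)+1) := by
        have := Int.natCast_dvd_natCast.mpr h7k
        push_cast at this
        exact this
      exact Dvd.dvd.mul_right (Dvd.dvd.mul_left h7k' _) _
    · push_neg at h2
      rw [jac_eq0 h2, mul_zero]
      exact dvd_zero _
  · push_neg at h1
    rw [jac_eq0 h1, zero_mul]
    exact dvd_zero _

-- generic coefficient lemmas over any commutative ring
section Generic
variable {R : Type} [CommRing R]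

lemma coeff_zero_of_dvdG {φ : PowerSeries R} {N d : ℕ} (h : (X:PowerSeries R)^N ∣ φ)
    (hd : d < N) : coeff d φ = 0 :=
  (PowerSeries.X_pow_dvd_iff.mp h) d hd

lemma coeff_eq_of_dvdG {φ ψ : PowerSeries R} {N d : ℕ} (h : (X:PowerSeries R)^N ∣ φ - ψ)
    (hd : d < N) : coeff d φ = coeff d ψ := by
  have := coeff_zero_of_dvdG h hd
  rw [map_sub, sub_eq_zero] at this
  exact this

end Generic

instance : Fact (Nat.Prime 7) := ⟨by norm_num⟩

instance : CharP (PowerSeries (ZMod 7)) 7 := ⟨fun x => by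
    rw [← map_natCast (C (R := ZMod 7)) x]
    constructor
    · intro h
      have h2 := congrArg (constantCoeff (R := ZMod 7)) h
      rw [PowerSeries.constantCoeff_C, map_zero] at h2
      exact (ZMod.natCast_eq_zero_iff x 7).mp h2
    · intro h
      rw [(ZMod.natCast_eq_zero_iff x 7).mpr h, map_zero]⟩

/-- the reduction map -/
abbrev pii : PowerSeries ℤ →+* PowerSeries (ZMod 7) :=
  PowerSeries.map (Int.castRingHom (ZMod 7))

lemma map_dvd7 {a b : A} {e : ℕ} (h : (X:A)^e ∣ a - b) :
    (X : PowerSeries (ZMod 7))^e ∣ pii a - pii b := by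
  obtain ⟨g, hg⟩ := h
  exact ⟨pii g, by rw [← map_sub, hg, map_mul, map_pow, PowerSeries.map_X]⟩

lemma map_sm (m r : ℕ) :
    pii (sm m r) = ∏ j ∈ range r, (1 - (X:PowerSeries (ZMod 7))^(m*(j+1))) := by
  unfold sm
  rw [map_prod]
  apply Finset.prod_congr rfl
  intro j _
  rw [map_sub, map_one, map_pow, PowerSeries.map_X]

lemma pow_seven_char (e : ℕ) : ((1:PowerSeries (ZMod 7)) - X^e)^7 = 1 - X^(7*e) := by
  rw [sub_eq_add_neg, add_pow_char, one_pow, sub_eq_add_neg]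
  congr 1
  rw [Odd.neg_pow (by decide), ← pow_mul, mul_comm e 7]

lemma pow7 (m : ℕ) (hm : 0 < m) : (pii (f m))^7 = pii (f (7*m)) := by
  ext N
  have h1 : (X : PowerSeries (ZMod 7))^(N+1) ∣ (pii (f m))^7 - (pii (sm m (N+1)))^7 :=
    dvd_trans (map_dvd7 (f_dvd m hm N)) (sub_dvd_pow_sub_pow _ _ 7)
  have h2 : (pii (sm m (N+1)))^7 = pii (sm (7*m) (N+1)) := by
    rw [map_sm, map_sm, ← Finset.prod_pow]
    apply Finset.prod_congr rfl
    intro j _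
    rw [pow_seven_char, mul_assoc]
  have h3 : (X : PowerSeries (ZMod 7))^(N+1) ∣ pii (f (7*m)) - pii (sm (7*m) (N+1)) :=
    map_dvd7 (f_dvd (7*m) (by omega) N)
  rw [coeff_eq_of_dvdG h1 (by omega), h2, coeff_eq_of_dvdG h3 (by omega)]

/-- supported on multiples of 7 -/
def Supp7 (φ : PowerSeries (ZMod 7)) : Prop :=
  ∀ d, ¬ (7 ∣ d) → coeff d φ = 0

lemma supp7_mul {φ ψ : PowerSeries (ZMod 7)} (h1 : Supp7 φ) (h2 : Supp7 ψ) : Supp7 (φ * ψ) := by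
  intro d hd
  rw [PowerSeries.coeff_mul]
  apply Finset.sum_eq_zero
  intro p hp
  rw [Finset.HasAntidiagonal.mem_antidiagonal] at hp
  by_cases hu : 7 ∣ p.1
  · rw [h2 p.2 (by omega), mul_zero]
  · rw [h1 p.1 hu, zero_mul]

lemma supp7_pow {φ : PowerSeries (ZMod 7)} (h : Supp7 φ) (n : ℕ) (hn : 0 < n) :
    Supp7 (φ^n) := by
  induction n with
  | zero => omega
  | succ m ih =>
    rcases Nat.eq_zero_or_pos m with h0 | h0
    · subst h0; simpa using h
    · rw [pow_succ]
      exact supp7_mul (ih h0) h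

lemma supp_sm_int (m' r : ℕ) : ∀ d, ¬ ((7:ℕ) ∣ d) → coeff d (sm (7*m') r) = 0 := by
  induction r with
  | zero =>
    intro d hd
    rw [sm_zero]
    rw [PowerSeries.coeff_one]
    rw [if_neg (by omega)]
  | succ r ih =>
    intro d hd
    rw [sm_succ, PowerSeries.coeff_mul]
    apply Finset.sum_eq_zero
    intro p hp
    rw [Finset.HasAntidiagonal.mem_antidiagonal] at hp
    by_cases hu : 7 ∣ p.1
    · have hv : ¬ (7 ∣ p.2) := by omega
      rw [map_sub, PowerSeries.coeff_one, PowerSeries.coeff_X_pow,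
        if_neg (by omega), if_neg (fun hh => hv ⟨m'*(r+1), by rw [hh]; ring⟩), sub_zero,
        mul_zero]
    · rw [ih p.1 hu, zero_mul]

lemma supp7_f (m' : ℕ) (hm' : 0 < m') : Supp7 (pii (f (7*m'))) := by
  intro d hd
  rw [PowerSeries.coeff_map]
  have h1 : coeff d (f (7*m')) = coeff d (sm (7*m') (d+1)) := by
    rw [f, coeff_mk]; rfl
  rw [h1, supp_sm_int m' (d+1) d hd, map_zero]

lemma constCoeff_f7 : coeff 0 (pii (f 7)) = 1 := by
  rw [PowerSeries.coeff_map]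
  have h1 : coeff 0 (f 7) = coeff 0 (sm 7 1) := by rw [f, coeff_mk]; rfl
  rw [h1, PowerSeries.coeff_zero_eq_constantCoeff, constantCoeff_sm 7 1 (by omega), map_one]

end JacAux

open JacAux in
theorem a7j1_7n5_mod7 (j : Nat) (a : Nat -> Int)
    (ha : PowerSeries.mk a * (f 1) ^ (7 * j + 1) = (f 2) ^ (7 * j)) (n : Nat) :
    a (7 * n + 5) % 7 = 0 := by
  have hs7 : Supp7 (pii (f 7)) := by
    have := supp7_f 1 one_pos
    rwa [show 7*1 = 7 from rfl] at this
  have hs14 : Supp7 (pii (f 14)) := by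
    have := supp7_f 2 (by omega)
    rwa [show 7*2 = 14 from rfl] at this
  have hA : pii (PowerSeries.mk a) * (pii (f 1))^(7*j+1) = (pii (f 2))^(7*j) := by
    have := congrArg pii ha
    rwa [map_mul, map_pow, map_pow] at this
  have key : pii (PowerSeries.mk a) * (pii (f 7))^(j+1) = (pii (f 1))^6 * (pii (f 14))^j := by
    have e1 : pii (PowerSeries.mk a) * (pii (f 1))^(7*j+1) * (pii (f 1))^6
        = (pii (f 2))^(7*j) * (pii (f 1))^6 := by rw [hA]
    rw [mul_assoc, ← pow_add, show 7*j+1+6 = 7*(j+1) by ring, pow_mul, pow_mul] at e1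
    rw [pow7 1 one_pos, pow7 2 (by omega)] at e1
    rw [show (7:ℕ)*1 = 7 from rfl, show (7:ℕ)*2 = 14 from rfl] at e1
    rw [e1, mul_comm]
  have hz : ∀ w : ℕ, w % 7 = 5 →
      PowerSeries.coeff w ((pii (f 1))^6 * (pii (f 14))^j) = 0 := by
    intro w hw
    rw [PowerSeries.coeff_mul]
    apply Finset.sum_eq_zero
    intro p hp
    rw [Finset.HasAntidiagonal.mem_antidiagonal] at hp
    by_cases hv : 7 ∣ p.2
    · have hu : p.1 % 7 = 5 := by omega
      have h6 : PowerSeries.coeff p.1 ((pii (f 1))^6) = 0 := by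
        rw [← map_pow, PowerSeries.coeff_map]
        have hdvd := seven_dvd_coeff_six hu
        exact (ZMod.intCast_zmod_eq_zero_iff_dvd _ 7).mpr (by exact_mod_cast hdvd)
      rw [h6, zero_mul]
    · rcases Nat.eq_zero_or_pos j with rfl | hj
      · simp only [pow_zero, PowerSeries.coeff_one]
        rw [if_neg (by omega), mul_zero]
      · rw [supp7_pow hs14 j hj p.2 hv, mul_zero]
  have main : ∀ n, PowerSeries.coeff (7*n+5) (pii (PowerSeries.mk a)) = 0 := by
    intro n
    induction n using Nat.strong_induction_on with
    | _ n ih =>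
      have h0 := congrArg (PowerSeries.coeff (7*n+5)) key
      rw [hz (7*n+5) (by omega), PowerSeries.coeff_mul] at h0
      have hsum : ∑ p ∈ Finset.HasAntidiagonal.antidiagonal (7*n+5),
            PowerSeries.coeff p.1 (pii (PowerSeries.mk a))
            * PowerSeries.coeff p.2 ((pii (f 7))^(j+1))
          = PowerSeries.coeff (7*n+5) (pii (PowerSeries.mk a))
            * PowerSeries.coeff 0 ((pii (f 7))^(j+1)) := by
        apply Finset.sum_eq_single_of_mem ((7*n+5 : ℕ), (0:ℕ))
          (Finset.HasAntidiagonal.mem_antidiagonal.mpr (by omega))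
        intro p hp hne
        rw [Finset.HasAntidiagonal.mem_antidiagonal] at hp
        by_cases h7 : 7 ∣ p.2
        · obtain ⟨m, hm⟩ := h7
          have hm1 : 1 ≤ m := by
            rcases Nat.eq_zero_or_pos m with rfl | h
            · exact absurd (Prod.ext_iff.mpr ⟨by omega, by omega⟩) hne
            · exact h
          have hp1 : p.1 = 7*(n-m)+5 := by omega
          rw [hp1, ih (n-m) (by omega), zero_mul]
        · rw [supp7_pow hs7 (j+1) (by omega) p.2 h7, mul_zero]
      rw [hsum] at h0
      have hc0 : PowerSeries.coeff 0 ((pii (f 7))^(j+1)) = 1 := by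
        have hcc := constCoeff_f7
        rw [PowerSeries.coeff_zero_eq_constantCoeff] at hcc ⊢
        rw [map_pow, hcc, one_pow]
      rw [hc0, mul_one] at h0
      exact h0
  have hfin := main n
  rw [PowerSeries.coeff_map, PowerSeries.coeff_mk] at hfin
  have hdvd : (7:ℤ) ∣ a (7*n+5) := (ZMod.intCast_zmod_eq_zero_iff_dvd _ 7).mp hfin
  exact Int.emod_eq_zero_of_dvd hdvd
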